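/- If G is a simple S_{2,4}-free graph with minimum degree at least 3, and v is a vertex of degree 6 in G, then there is no edge between the closed neighborhood N[v] and the rest of the graph; that is, G[N[v]] is a union of connected components of G. -/

import Mathlib

/-- `G` contains the double star `S_{2,4}`: an edge `x y`, two further neighbors of `x`,
four further neighbors of `y`, all eight vertices distinct. -/
def ContainsS24 {V : Type*} (G : SimpleGraph V) : Prop :=
  ∃ x y a b c d e f : V, G.Adj x y ∧ G.Adj x a ∧ G.Adj x b ∧
    G.Adj y c ∧ G.Adj y d ∧ G.Adj y e ∧ G.Adj y f ∧
    ([x, y, a, b, c, d, e, f] : List V).Nodup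

theorem stmt_1 {V : Type*} [Fintype V] [DecidableEq V] (G : SimpleGraph V)
    [DecidableRel G.Adj] (hfree : ¬ ContainsS24 G)
    (hmin : ∀ x : V, 3 ≤ G.degree x) (v : V) (hv : G.degree v = 6) :
    ∀ a b : V, a ∈ insert v (G.neighborSet v) → b ∉ insert v (G.neighborSet v) →
      ¬ G.Adj a b := by
  intro a b ha hb hab
  -- b is not v and not a neighbor of v
  have hbv : b ≠ v := fun h => hb (by rw [h]; exact Set.mem_insert _ _)
  have hbnv : ¬ G.Adj v b := fun h => hb (Set.mem_insert_of_mem _ h)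
  -- a must be a neighbor of v (if a = v then b would be a neighbor of v)
  have hav : G.Adj v a := by
    rcases ha with rfl | h
    · exact absurd hab hbnv
    · exact h
  have hane : a ≠ v := fun h => G.loopless.irrefl v (h ▸ hav).symm
  -- pick c : a neighbor of a distinct from v and b
  have hca : 1 ≤ ((G.neighborFinset a) \ {v, b}).card := by
    have h1 : ((G.neighborFinset a) \ {v, b}).card ≥ (G.neighborFinset a).card - 2 := by
      have := Finset.card_le_card_sdiff_add_card (s := G.neighborFinset a) (t := ({v, b} : Finset V))
      have h2 : ({v, b} : Finset V).card ≤ 2 := Finset.card_insert_le _ _ |>.trans (by simp)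
      omega
    have h3 := hmin a
    rw [← G.card_neighborFinset_eq_degree] at h3
    omega
  obtain ⟨c, hc⟩ := Finset.card_pos.mp (show 0 < ((G.neighborFinset a) \ {v, b}).card by omega)
  rw [Finset.mem_sdiff, Finset.mem_insert, Finset.mem_singleton, SimpleGraph.mem_neighborFinset] at hc
  obtain ⟨hac, hcvb⟩ := hc
  push_neg at hcvb
  obtain ⟨hcv, hcb⟩ := hcvb
  -- the remaining neighbors of v
  set S := (G.neighborFinset v) \ {a, c} with hS
  have hScard : 4 ≤ S.card := by
    rw [hS]
    have h1 := Finset.card_le_card_sdiff_add_card (s := G.neighborFinset v) (t := ({a, c} : Finset V))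
    have h2 : ({a, c} : Finset V).card ≤ 2 := Finset.card_insert_le _ _ |>.trans (by simp)
    rw [G.card_neighborFinset_eq_degree, hv] at h1
    omega
  obtain ⟨d, hd⟩ := Finset.card_pos.mp (show 0 < S.card by omega)
  have h1 : 3 ≤ (S.erase d).card := by
    rw [Finset.card_erase_of_mem hd]; omega
  obtain ⟨e, he⟩ := Finset.card_pos.mp (show 0 < (S.erase d).card by omega)
  have h2 : 2 ≤ ((S.erase d).erase e).card := by
    rw [Finset.card_erase_of_mem he]; omega
  obtain ⟨f, hf⟩ := Finset.card_pos.mp (show 0 < ((S.erase d).erase e).card by omega)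
  have h3 : 1 ≤ (((S.erase d).erase e).erase f).card := by
    rw [Finset.card_erase_of_mem hf]; omega
  obtain ⟨g, hg⟩ := Finset.card_pos.mp (show 0 < (((S.erase d).erase e).erase f).card by omega)
  -- unpack memberships
  have hgf : g ≠ f := (Finset.mem_erase.mp hg).1
  have hg' := (Finset.mem_erase.mp hg).2
  have hge : g ≠ e := (Finset.mem_erase.mp hg').1
  have hg'' := (Finset.mem_erase.mp hg').2
  have hgd : g ≠ d := (Finset.mem_erase.mp hg'').1
  have hgS : g ∈ S := (Finset.mem_erase.mp hg'').2
  have hfe : f ≠ e := (Finset.mem_erase.mp hf).1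
  have hf' := (Finset.mem_erase.mp hf).2
  have hfd : f ≠ d := (Finset.mem_erase.mp hf').1
  have hfS : f ∈ S := (Finset.mem_erase.mp hf').2
  have hed : e ≠ d := (Finset.mem_erase.mp he).1
  have heS : e ∈ S := (Finset.mem_erase.mp he).2
  have memS : ∀ x, x ∈ S → G.Adj v x ∧ x ≠ a ∧ x ≠ c := by
    intro x hx
    rw [hS, Finset.mem_sdiff, Finset.mem_insert, Finset.mem_singleton,
      SimpleGraph.mem_neighborFinset] at hx
    tauto
  obtain ⟨hvd, hda, hdc⟩ := memS d hd
  obtain ⟨hve, hea, hec⟩ := memS e heS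
  obtain ⟨hvf, hfa, hfc⟩ := memS f hfS
  obtain ⟨hvg, hga, hgc⟩ := memS g hgS
  have hSv : ∀ x, x ∈ S → x ≠ v := fun x hx => G.ne_of_adj (memS x hx).1 |>.symm
  have hSb : ∀ x, x ∈ S → x ≠ b := by
    intro x hx h; exact hbnv (h ▸ (memS x hx).1)
  apply hfree
  refine ⟨a, v, b, c, d, e, f, g, hav.symm, hab, hac, hvd, hve, hvf, hvg, ?_⟩
  have hba : b ≠ a := fun h => G.loopless.irrefl a (h ▸ hab)
  have hca' : c ≠ a := fun h => G.loopless.irrefl a (h ▸ hac)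
  simp only [List.nodup_cons, List.mem_cons, List.not_mem_nil, or_false, List.mem_singleton,
    List.nodup_nil, and_true, not_or]
  exact ⟨⟨hane, G.ne_of_adj hab, G.ne_of_adj hac, hda.symm, hea.symm, hfa.symm, hga.symm⟩,
    ⟨hbv.symm, hcv.symm, (hSv d hd).symm, (hSv e heS).symm, (hSv f hfS).symm, (hSv g hgS).symm⟩,
    ⟨hcb.symm, (hSb d hd).symm, (hSb e heS).symm, (hSb f hfS).symm, (hSb g hgS).symm⟩,
    ⟨hdc.symm, hec.symm, hfc.symm, hgc.symm⟩,
    ⟨hed.symm, hfd.symm, hgd.symm⟩, ⟨hfe.symm, hge.symm⟩, hgf.symm, not_false⟩
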